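/- A subgroup H = ⟨a^{m₁}, b^{n₁} a^s⟩ of ZM(m,n,r) (with (m₁,n₁,s) a valid subgroup parameter) is normal in ZM(m,n,r) if and only if m₁ divides r^{n₁}−1 and s = 0. -/

import Mathlib

private def auxS (R k : ℕ) : ℕ := ∑ i ∈ Finset.range k, R ^ i

private lemma auxS_zero (R : ℕ) : auxS R 0 = 0 := by simp [auxS]

private lemma auxS_one (R : ℕ) : auxS R 1 = 1 := by simp [auxS]

private lemma auxS_succ (R k : ℕ) : auxS R (k+1) = R * auxS R k + 1 := by
  simp only [auxS]
  rw [Finset.sum_range_succ']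
  simp [pow_succ', Finset.mul_sum]

private lemma auxS_succ' (R k : ℕ) : auxS R (k+1) = auxS R k + R ^ k := by
  simp [auxS, Finset.sum_range_succ]

private lemma auxS_add (R u v : ℕ) :
    auxS R (u + v) = auxS R u + R ^ u * auxS R v := by
  induction v with
  | zero => simp [auxS_zero]
  | succ v ih =>
    rw [Nat.add_succ, auxS_succ' R (u+v), auxS_succ' R v, ih, pow_add]
    ring

private lemma aux_conj {G : Type*} [Group G] {a b : G} {r : ℕ}
    (hrel : b⁻¹ * a * b = a ^ r) :
    ∀ j i : ℕ, a ^ i * b ^ j = b ^ j * a ^ (i * r ^ j) := by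
  have hcp : ∀ (x : G) (k : ℕ), (b⁻¹ * x * b) ^ k = b⁻¹ * x ^ k * b := by
    intro x k
    induction k with
    | zero => group
    | succ k ih => rw [pow_succ, ih, pow_succ]; group
  have key : ∀ k : ℕ, a ^ k * b = b * a ^ (r * k) := by
    intro k
    have h1 : b⁻¹ * a ^ k * b = (a ^ r) ^ k := by rw [← hcp, hrel]
    rw [← pow_mul] at h1
    calc a ^ k * b = b * (b⁻¹ * a ^ k * b) := by group
      _ = b * a ^ (r * k) := by rw [h1]
  have h1 : ∀ j : ℕ, a * b ^ j = b ^ j * a ^ (r ^ j) := by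
    intro j
    induction j with
    | zero => simp
    | succ j ih =>
      calc a * b ^ (j+1) = (a * b ^ j) * b := by rw [pow_succ]; group
        _ = b ^ j * (a ^ (r ^ j) * b) := by rw [ih]; group
        _ = b ^ j * (b * a ^ (r * r ^ j)) := by rw [key]
        _ = b ^ (j+1) * a ^ (r ^ (j+1)) := by rw [pow_succ, pow_succ']; group
  intro j i
  induction i with
  | zero => simp
  | succ i ih =>
    calc a ^ (i+1) * b ^ j = a ^ i * (a * b ^ j) := by rw [pow_succ]; group
      _ = a ^ i * b ^ j * a ^ (r ^ j) := by rw [h1]; group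
      _ = b ^ j * (a ^ (i * r ^ j) * a ^ (r ^ j)) := by rw [ih]; group
      _ = b ^ j * a ^ ((i+1) * r ^ j) := by rw [← pow_add, add_mul, one_mul]

private lemma aux_mem_normalizer {G : Type*} [Group G] (S : Set G) (g : G)
    (h1 : ∀ x ∈ S, g * x * g⁻¹ ∈ Subgroup.closure S)
    (h2 : ∀ x ∈ S, g⁻¹ * x * g ∈ Subgroup.closure S) :
    g ∈ Subgroup.normalizer (Subgroup.closure S : Set G) := by
  have main : ∀ (g : G), (∀ x ∈ S, g * x * g⁻¹ ∈ Subgroup.closure S) →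
      ∀ h ∈ Subgroup.closure S, g * h * g⁻¹ ∈ Subgroup.closure S := by
    intro g hg h hh
    induction hh using Subgroup.closure_induction with
    | mem x hx => exact hg x hx
    | one => simpa using Subgroup.one_mem _
    | mul x y hx hy px py =>
      have e : g * (x * y) * g⁻¹ = (g * x * g⁻¹) * (g * y * g⁻¹) := by group
      rw [e]; exact Subgroup.mul_mem _ px py
    | inv x hx px =>
      have e : g * x⁻¹ * g⁻¹ = (g * x * g⁻¹)⁻¹ := by group
      rw [e]; exact Subgroup.inv_mem _ px
  rw [Subgroup.mem_normalizer_iff]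
  intro h
  constructor
  · exact main g h1 h
  · intro hh
    have h2' : ∀ x ∈ S, g⁻¹ * x * (g⁻¹)⁻¹ ∈ Subgroup.closure S := by
      intro x hx; simpa using h2 x hx
    have := main g⁻¹ h2' _ hh
    have e : g⁻¹ * (g * h * g⁻¹) * (g⁻¹)⁻¹ = h := by group
    rwa [e] at this

/-- The subgroup `⟨a^{m₁}, b^{n₁} a^s⟩` of `ZM(m,n,r)` is normal iff
`m₁ ∣ r^{n₁}-1` and `s = 0`. -/
theorem stmt_17 {G : Type*} [Group G] [Finite G]
    (m n r : ℕ) (hm : 0 < m) (hn : 0 < n)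
    (hgcd1 : Nat.gcd m n = 1) (hgcd2 : Nat.gcd m (r - 1) = 1)
    (hrn : r ^ n % m = 1 % m)
    (a b : G) (ha : orderOf a = m) (hb : orderOf b = n)
    (hrel : b⁻¹ * a * b = a ^ r)
    (hgen : Subgroup.closure {a, b} = ⊤)
    (hcard : Nat.card G = m * n)
    (m₁ n₁ s : ℕ) (hm₁ : m₁ ∣ m) (hn₁ : n₁ ∣ n) (hs : s < m₁)
    (hparam : m₁ ∣ s * ∑ i ∈ Finset.range (n / n₁), r ^ (n₁ * i)) :
    (Subgroup.closure {a ^ m₁, b ^ n₁ * a ^ s} : Subgroup G).Normal ↔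
      (m₁ ∣ r ^ n₁ - 1 ∧ s = 0) := by
  have hm₁pos : 0 < m₁ := Nat.pos_of_dvd_of_pos hm₁ hm
  have hn₁pos : 0 < n₁ := Nat.pos_of_dvd_of_pos hn₁ hn
  haveI : NeZero m₁ := ⟨hm₁pos.ne'⟩
  have ham : a ^ m = 1 := by rw [← ha]; exact pow_orderOf_eq_one a
  have hbn : b ^ n = 1 := by rw [← hb]; exact pow_orderOf_eq_one b
  rcases Nat.lt_or_ge m 2 with hm1 | hm2
  · -- degenerate case m = 1
    have hm' : m = 1 := by omega
    have ha1 : a = 1 := orderOf_eq_one_iff.mp (by rw [ha, hm'])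
    have hm₁1 : m₁ = 1 := Nat.dvd_one.mp (hm' ▸ hm₁)
    have hs0 : s = 0 := by omega
    have hgb : ∀ g : G, g ∈ Subgroup.zpowers b := by
      intro g
      have hle : (⊤ : Subgroup G) ≤ Subgroup.zpowers b := by
        rw [← hgen]
        apply (Subgroup.closure_le _).mpr
        intro x hx
        simp only [Set.mem_insert_iff, Set.mem_singleton_iff] at hx
        rcases hx with rfl | rfl
        · rw [ha1]; exact Subgroup.one_mem _
        · exact Subgroup.mem_zpowers _
      exact hle (Subgroup.mem_top g)
    have hnormal : (Subgroup.closure {a ^ m₁, b ^ n₁ * a ^ s} : Subgroup G).Normal := by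
      constructor
      intro x hx g
      obtain ⟨i, hi⟩ := hgb g
      obtain ⟨j, hj⟩ := hgb x
      have e : g * x * g⁻¹ = x := by
        rw [← hi, ← hj]
        group
      rw [e]; exact hx
    exact ⟨fun _ => ⟨by rw [hm₁1]; exact one_dvd _, hs0⟩, fun _ => hnormal⟩
  · -- main case m ≥ 2
    have hr1 : 1 ≤ r := by
      rcases Nat.eq_zero_or_pos r with rfl | h
      · rw [zero_pow hn.ne', Nat.zero_mod, Nat.one_mod_eq_one.mpr (by omega)] at hrn
        omega
      · exact h
    have hR1 : 1 ≤ r ^ n₁ := Nat.one_le_pow _ _ (by omega)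
    have hRn : a ^ (r ^ n) = a := by
      have h := pow_eq_pow_iff_modEq (x := a) (n := r ^ n) (m := 1) |>.mpr
        (by rw [ha]; exact hrn)
      simpa using h
    have hconj : ∀ j i : ℕ, a ^ i * b ^ j = b ^ j * a ^ (i * r ^ j) := aux_conj hrel
    have hmcast : ((m : ℕ) : ZMod m₁) = 0 :=
      (ZMod.natCast_eq_zero_iff m m₁).mpr hm₁
    have hnq : n₁ * (n / n₁) = n := Nat.mul_div_cancel' hn₁
    have hparam' : ((s * auxS (r ^ n₁) (n / n₁) : ℕ) : ZMod m₁) = 0 := by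
      rw [ZMod.natCast_eq_zero_iff]
      simpa [auxS, pow_mul] using hparam
    have hqj : ∀ j : ℕ, ((s * auxS (r ^ n₁) ((n / n₁) * j) : ℕ) : ZMod m₁) = 0 := by
      intro j
      induction j with
      | zero => simp [auxS_zero]
      | succ j ih =>
        rw [Nat.mul_succ, auxS_add]
        push_cast at ih hparam' ⊢
        linear_combination ih + ((r : ZMod m₁) ^ n₁) ^ ((n / n₁) * j) * hparam'
    -- multiplication law for normal forms
    have hCmul : ∀ k t k' t' : ℕ, (b ^ (n₁ * k) * a ^ t) * (b ^ (n₁ * k') * a ^ t')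
        = b ^ (n₁ * (k + k')) * a ^ (t * (r ^ n₁) ^ k' + t') := by
      intro k t k' t'
      calc (b ^ (n₁ * k) * a ^ t) * (b ^ (n₁ * k') * a ^ t')
          = b ^ (n₁ * k) * (a ^ t * b ^ (n₁ * k')) * a ^ t' := by group
        _ = b ^ (n₁ * k) * (b ^ (n₁ * k') * a ^ (t * r ^ (n₁ * k'))) * a ^ t' := by
            rw [hconj]
        _ = b ^ (n₁ * (k + k')) * a ^ (t * (r ^ n₁) ^ k' + t') := by
            rw [← mul_assoc, ← pow_add, mul_assoc, ← pow_add, ← pow_mul, ← Nat.mul_add]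
    -- the comparison subgroup K
    set C : Set G := {g | ∃ k t : ℕ, g = b ^ (n₁ * k) * a ^ t ∧
      ((t : ZMod m₁) = ((s * auxS (r ^ n₁) k : ℕ) : ZMod m₁))} with hC
    have hC1 : (1 : G) ∈ C := ⟨0, 0, by simp, by simp [auxS_zero]⟩
    have hCm : ∀ g ∈ C, ∀ g' ∈ C, g * g' ∈ C := by
      rintro g ⟨k, t, rfl, hk⟩ g' ⟨k', t', rfl, hk'⟩
      refine ⟨k + k', t * (r ^ n₁) ^ k' + t', hCmul k t k' t', ?_⟩
      have hsplit : auxS (r ^ n₁) (k + k')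
          = auxS (r ^ n₁) k' + ((r ^ n₁)) ^ k' * auxS (r ^ n₁) k := by
        rw [Nat.add_comm k k']; exact auxS_add _ k' k
      rw [hsplit]
      push_cast at hk hk' ⊢
      rw [hk, hk']
      ring
    have hCp : ∀ g ∈ C, ∀ p : ℕ, g ^ p ∈ C := by
      intro g hg p
      induction p with
      | zero => simpa using hC1
      | succ p ih => rw [pow_succ]; exact hCm _ ih _ hg
    have hCi : ∀ g ∈ C, g⁻¹ ∈ C := by
      intro g hg
      have h1 : g ^ (orderOf g - 1) * g = 1 := by
        rw [← pow_succ, Nat.sub_add_cancel (orderOf_pos g), pow_orderOf_eq_one]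
      have h2 : g⁻¹ = g ^ (orderOf g - 1) := inv_eq_of_mul_eq_one_left h1
      rw [h2]; exact hCp g hg _
    set K : Subgroup G :=
      { carrier := C
        one_mem' := hC1
        mul_mem' := fun {x y} hx hy => hCm x hx y hy
        inv_mem' := fun {x} hx => hCi x hx } with hK
    have hHK : (Subgroup.closure {a ^ m₁, b ^ n₁ * a ^ s} : Subgroup G) ≤ K := by
      apply (Subgroup.closure_le _).mpr
      intro x hx
      simp only [Set.mem_insert_iff, Set.mem_singleton_iff] at hx
      rcases hx with rfl | rfl
      · exact ⟨0, m₁, by simp, by simp [auxS_zero, ZMod.natCast_self]⟩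
      · exact ⟨1, s, by rw [mul_one], by simp [auxS_one]⟩
    -- the key extraction lemma
    have hkey : ∀ w : ℕ, a ^ w ∈ (Subgroup.closure {a ^ m₁, b ^ n₁ * a ^ s} : Subgroup G) →
        ((w : ZMod m₁) = 0) := by
      intro w hw
      obtain ⟨k, t, heq, hc⟩ := hHK hw
      have hx : b ^ (n₁ * k) = a ^ ((w : ℤ) - (t : ℤ)) := by
        rw [zpow_sub, zpow_natCast, zpow_natCast, heq]
        group
      have hdM : orderOf (b ^ (n₁ * k)) ∣ m := by
        apply orderOf_dvd_of_pow_eq_one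
        rw [hx, ← zpow_natCast (a ^ ((w : ℤ) - (t : ℤ))) m, ← zpow_mul,
          mul_comm ((w : ℤ) - (t : ℤ)) (m : ℤ), zpow_mul, zpow_natCast, ham, one_zpow]
      have hdN : orderOf (b ^ (n₁ * k)) ∣ n := by
        apply orderOf_dvd_of_pow_eq_one
        rw [← pow_mul, mul_comm, pow_mul, hbn, one_pow]
      have hone : b ^ (n₁ * k) = 1 := by
        have hd : orderOf (b ^ (n₁ * k)) ∣ Nat.gcd m n := Nat.dvd_gcd hdM hdN
        rw [hgcd1, Nat.dvd_one] at hd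
        exact orderOf_eq_one_iff.mp hd
      have hnk : n ∣ n₁ * k := by
        rw [← hb]; exact orderOf_dvd_of_pow_eq_one hone
      have hat : ((m₁ : ℤ)) ∣ ((w : ℤ) - (t : ℤ)) := by
        have h1 : a ^ ((w : ℤ) - (t : ℤ)) = 1 := by rw [← hx, hone]
        have h2 := orderOf_dvd_iff_zpow_eq_one.mpr h1
        rw [ha] at h2
        exact dvd_trans (Int.natCast_dvd_natCast.mpr hm₁) h2
      have hwt : (w : ZMod m₁) = (t : ZMod m₁) := by
        have h3 := (ZMod.intCast_zmod_eq_zero_iff_dvd _ m₁).mpr hat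
        push_cast at h3
        exact sub_eq_zero.mp h3
      obtain ⟨j, hj⟩ : (n / n₁) ∣ k := by
        have h4 : n₁ * (n / n₁) ∣ n₁ * k := by rw [hnq]; exact hnk
        exact (Nat.mul_dvd_mul_iff_left hn₁pos).mp h4
      rw [hwt, hc, hj]
      exact hqj j
    -- convenient memberships
    have hyH : b ^ n₁ * a ^ s ∈ (Subgroup.closure {a ^ m₁, b ^ n₁ * a ^ s} : Subgroup G) :=
      Subgroup.subset_closure (by simp)
    have haH : a ^ m₁ ∈ (Subgroup.closure {a ^ m₁, b ^ n₁ * a ^ s} : Subgroup G) :=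
      Subgroup.subset_closure (by simp)
    have hmemA : ∀ w : ℕ, (w : ZMod m₁) = 0 →
        a ^ w ∈ (Subgroup.closure {a ^ m₁, b ^ n₁ * a ^ s} : Subgroup G) := by
      intro w hw
      obtain ⟨c, rfl⟩ : m₁ ∣ w := (ZMod.natCast_eq_zero_iff _ _).mp hw
      rw [pow_mul]
      exact pow_mem haH c
    have hainv : a⁻¹ = a ^ (m - 1) := by
      apply inv_eq_of_mul_eq_one_left
      rw [← pow_succ, Nat.sub_add_cancel (by omega), ham]
    -- conjugation computations
    have hcomp1 : a⁻¹ * (b ^ n₁ * a ^ s) * a = b ^ n₁ * a ^ (s + ((m - 1) * r ^ n₁ + 1)) := by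
      rw [hainv]
      calc a ^ (m-1) * (b ^ n₁ * a ^ s) * a
          = (a ^ (m-1) * b ^ n₁) * a ^ (s + 1) := by rw [pow_succ]; group
        _ = (b ^ n₁ * a ^ ((m-1) * r ^ n₁)) * a ^ (s + 1) := by rw [hconj n₁ (m-1)]
        _ = b ^ n₁ * a ^ (s + ((m - 1) * r ^ n₁ + 1)) := by
            rw [mul_assoc, ← pow_add]
            congr 2
            omega
    have hcomp2 : b⁻¹ * (b ^ n₁ * a ^ s) * b = b ^ n₁ * a ^ (s * r) := by
      have e : a ^ s * b = b * a ^ (s * r) := by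
        have h := hconj 1 s
        simpa using h
      calc b⁻¹ * (b ^ n₁ * a ^ s) * b = b⁻¹ * b ^ n₁ * (a ^ s * b) := by group
        _ = b⁻¹ * b ^ n₁ * (b * a ^ (s * r)) := by rw [e]
        _ = b ^ n₁ * a ^ (s * r) := by group
    constructor
    · -- normal → conditions
      intro hN
      have h1 : a⁻¹ * (b ^ n₁ * a ^ s) * a ∈
          (Subgroup.closure {a ^ m₁, b ^ n₁ * a ^ s} : Subgroup G) := by
        simpa using hN.conj_mem _ hyH a⁻¹
      have h1' : (b ^ n₁ * a ^ s) * a ^ ((m - 1) * r ^ n₁ + 1) ∈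
          (Subgroup.closure {a ^ m₁, b ^ n₁ * a ^ s} : Subgroup G) := by
        rw [mul_assoc, ← pow_add, ← hcomp1]
        exact h1
      have h2 : a ^ ((m - 1) * r ^ n₁ + 1) ∈
          (Subgroup.closure {a ^ m₁, b ^ n₁ * a ^ s} : Subgroup G) := by
        have h := mul_mem (inv_mem hyH) h1'
        have e4 : (b ^ n₁ * a ^ s)⁻¹ * (b ^ n₁ * a ^ s * a ^ ((m - 1) * r ^ n₁ + 1))
            = a ^ ((m - 1) * r ^ n₁ + 1) := by group
        rwa [e4] at h
      have hRcast : ((r : ZMod m₁) ^ n₁) = 1 := by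
        have h0 := hkey _ h2
        push_cast [Nat.cast_sub (show 1 ≤ m by omega)] at h0
        rw [hmcast] at h0
        linear_combination -h0
      have hdvd : m₁ ∣ r ^ n₁ - 1 := by
        rw [← ZMod.natCast_eq_zero_iff]
        push_cast [Nat.cast_sub hR1]
        rw [hRcast]
        ring
      have h3 : b⁻¹ * (b ^ n₁ * a ^ s) * b ∈
          (Subgroup.closure {a ^ m₁, b ^ n₁ * a ^ s} : Subgroup G) := by
        simpa using hN.conj_mem _ hyH b⁻¹
      have hle : s ≤ s * r := Nat.le_mul_of_pos_right s (by omega)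
      have h3' : (b ^ n₁ * a ^ s) * a ^ (s * r - s) ∈
          (Subgroup.closure {a ^ m₁, b ^ n₁ * a ^ s} : Subgroup G) := by
        rw [mul_assoc, ← pow_add]
        have e2 : s + (s * r - s) = s * r := by omega
        rw [e2, ← hcomp2]
        exact h3
      have h4 : a ^ (s * r - s) ∈
          (Subgroup.closure {a ^ m₁, b ^ n₁ * a ^ s} : Subgroup G) := by
        have h := mul_mem (inv_mem hyH) h3'
        have e4 : (b ^ n₁ * a ^ s)⁻¹ * (b ^ n₁ * a ^ s * a ^ (s * r - s))
            = a ^ (s * r - s) := by group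
        rwa [e4] at h
      have h5 : m₁ ∣ s * r - s := by
        have h := hkey _ h4
        rwa [ZMod.natCast_eq_zero_iff] at h
      have h6 : m₁ ∣ s * (r - 1) := by
        have e3 : s * (r - 1) = s * r - s := by
          rw [Nat.mul_sub, mul_one]
        rwa [e3]
      have hcop : Nat.Coprime m₁ (r - 1) := Nat.Coprime.coprime_dvd_left hm₁ hgcd2
      have h7 : m₁ ∣ s := hcop.dvd_of_dvd_mul_right h6
      exact ⟨hdvd, Nat.eq_zero_of_dvd_of_lt h7 hs⟩
    · -- conditions → normal
      rintro ⟨hdvd, hs0⟩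
      have hRZ : ((r : ZMod m₁) ^ n₁) = 1 := by
        have h0 : ((r ^ n₁ - 1 : ℕ) : ZMod m₁) = 0 :=
          (ZMod.natCast_eq_zero_iff _ _).mpr hdvd
        rw [Nat.cast_sub hR1] at h0
        push_cast at h0
        linear_combination h0
      simp only [hs0, pow_zero, mul_one, zero_add] at hyH haH hmemA hcomp1 ⊢
      -- now the subgroup is closure {a^m₁, b^n₁}
      have econj2 : ∀ E : ℕ, b⁻¹ * a ^ E * b = a ^ (E * r) := by
        intro E
        have h := hconj 1 E
        simp only [pow_one] at h
        rw [mul_assoc, h, inv_mul_cancel_left]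
      have econj1 : a * b ^ n₁ = b ^ n₁ * a ^ (r ^ n₁) := by
        have h := hconj n₁ 1
        simpa using h
      have f1 : b * a ^ m₁ * b⁻¹ = a ^ (m₁ * r ^ (n - 1)) := by
        have e : b⁻¹ * a ^ (m₁ * r ^ (n - 1)) * b = a ^ m₁ := by
          rw [econj2, mul_assoc, ← pow_succ, Nat.sub_add_cancel (show 1 ≤ n by omega),
            mul_comm m₁ (r ^ n), pow_mul, hRn]
        rw [← e]; group
      have conjmem : ∀ x ∈ ({a ^ m₁, b ^ n₁} : Set G), ∀ g' ∈ ({a, b, a⁻¹, b⁻¹} : Set G),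
          g' * x * g'⁻¹ ∈ (Subgroup.closure {a ^ m₁, b ^ n₁} : Subgroup G) := by
        intro x hx g' hg'
        simp only [Set.mem_insert_iff, Set.mem_singleton_iff] at hx hg'
        rcases hx with rfl | rfl
        · rcases hg' with h | h | h | h
          · rw [h]
            have e : a * a ^ m₁ * a⁻¹ = a ^ m₁ := by group
            rw [e]; exact haH
          · rw [h, f1]
            refine hmemA _ ?_
            push_cast [ZMod.natCast_self]
            ring
          · rw [h]
            have e : a⁻¹ * a ^ m₁ * a⁻¹⁻¹ = a ^ m₁ := by group
            rw [e]; exact haH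
          · rw [h]
            have e : b⁻¹ * a ^ m₁ * b⁻¹⁻¹ = a ^ (m₁ * r) := by
              rw [inv_inv]; exact econj2 m₁
            rw [e]
            refine hmemA _ ?_
            push_cast [ZMod.natCast_self]
            ring
        · rcases hg' with h | h | h | h
          · rw [h]
            have epow : a ^ (r ^ n₁) = a ^ (r ^ n₁ - 1) * a := by
              rw [← pow_succ, Nat.sub_add_cancel hR1]
            have e : a * b ^ n₁ * a⁻¹ = b ^ n₁ * a ^ (r ^ n₁ - 1) := by
              rw [econj1, epow]; group
            rw [e]
            refine mul_mem hyH (hmemA _ ?_)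
            rw [Nat.cast_sub hR1]
            push_cast
            rw [hRZ]
            ring
          · rw [h]
            have e : b * b ^ n₁ * b⁻¹ = b ^ n₁ := by group
            rw [e]; exact hyH
          · rw [h]
            have e : a⁻¹ * b ^ n₁ * a⁻¹⁻¹ = b ^ n₁ * a ^ ((m - 1) * r ^ n₁ + 1) := by
              rw [inv_inv]; exact hcomp1
            rw [e]
            refine mul_mem hyH (hmemA _ ?_)
            push_cast [Nat.cast_sub (show 1 ≤ m by omega)]
            rw [hmcast, hRZ]
            ring
          · rw [h]
            have e : b⁻¹ * b ^ n₁ * b⁻¹⁻¹ = b ^ n₁ := by group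
            rw [e]; exact hyH
      rw [← Subgroup.normalizer_eq_top_iff, eq_top_iff, ← hgen, Subgroup.closure_le]
      intro g hg
      simp only [Set.mem_insert_iff, Set.mem_singleton_iff] at hg
      have hgmem : g ∈ ({a, b, a⁻¹, b⁻¹} : Set G) := by
        rcases hg with rfl | rfl <;> simp
      have hginv : g⁻¹ ∈ ({a, b, a⁻¹, b⁻¹} : Set G) := by
        rcases hg with rfl | rfl <;> simp
      simp only [SetLike.mem_coe]
      apply aux_mem_normalizer
      · intro x hx
        exact conjmem x hx g hgmem
      · intro x hx
        have h := conjmem x hx g⁻¹ hginv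
        simpa using h
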